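/- Let (V, ≥) be a totally ordered ℚ-vector space and h: ℤI → V a ℤ-linear map such that β ↦ h(β)/ht(β) is injective on the set Ψ of indivisible positive roots of affine type A_{e-1}^{(1)} (real roots together with δ). Then the relation β ≽ γ ⟺ h(β)/ht(β) ≥ h(γ)/ht(γ) defines a convex preorder on Φ₊: it is reflexive, transitive, total; β ≽ γ with β+γ ∈ Φ₊ implies β ≽ β+γ ≽ γ; and β ≽ γ ≽ β holds iff β = γ or both β,γ are imaginary. -/

import Mathlib

/-- The positive root `α(t,L) = α_{t̄} + ⋯ + α_{t̄+L-1}` of affine type `A_{e-1}^{(1)}`,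
as an element of the root lattice `ZMod e → ℤ`. -/
def alphaRoot (e : ℕ) (t : ℤ) (L : ℕ) : ZMod e → ℤ := fun j =>
  (((Finset.range L).filter (fun k : ℕ => ((t + (k : ℤ) : ℤ) : ZMod e) = j)).card : ℤ)

/-- The null root `δ = α_0 + α_1 + ⋯ + α_{e-1}`. -/
def deltaRoot (e : ℕ) : ZMod e → ℤ := fun _ => 1

/-- The set `Φ₊` of positive roots of affine type `A_{e-1}^{(1)}`. -/
def PhiPos (e : ℕ) : Set (ZMod e → ℤ) :=
  {β | ∃ t : ℤ, ∃ L : ℕ, 0 < L ∧ β = alphaRoot e t L}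

/-- Imaginary roots: positive multiples of the null root `δ`. -/
def ImaginaryRoot (e : ℕ) (β : ZMod e → ℤ) : Prop :=
  ∃ m : ℕ, 0 < m ∧ β = fun _ => (m : ℤ)

/-- A convex preorder on `Φ₊`: reflexive, transitive, total, convex, and with mutual
comparability exactly for equal or both-imaginary roots. -/
structure ConvexPreorderOn (e : ℕ) where
  rel : (ZMod e → ℤ) → (ZMod e → ℤ) → Prop
  refl : ∀ β ∈ PhiPos e, rel β β
  trans : ∀ β γ ν, β ∈ PhiPos e → γ ∈ PhiPos e → ν ∈ PhiPos e →
    rel β γ → rel γ ν → rel β ν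
  total : ∀ β γ, β ∈ PhiPos e → γ ∈ PhiPos e → rel β γ ∨ rel γ β
  convex : ∀ β γ, β ∈ PhiPos e → γ ∈ PhiPos e → rel β γ → β + γ ∈ PhiPos e →
    rel β (β + γ) ∧ rel (β + γ) γ
  imag_equiv : ∀ β γ, β ∈ PhiPos e → γ ∈ PhiPos e →
    ((rel β γ ∧ rel γ β) ↔ (β = γ ∨ (ImaginaryRoot e β ∧ ImaginaryRoot e γ)))

/-- The strict relation `β ≻ γ` associated to a convex preorder. -/
def GtRel {e : ℕ} (P : ConvexPreorderOn e) (β γ : ZMod e → ℤ) : Prop :=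
  P.rel β γ ∧ ¬ P.rel γ β

/-- The height of an element of the root lattice: the sum of its coefficients. -/
def height (e : ℕ) [NeZero e] (β : ZMod e → ℤ) : ℤ := ∑ i : ZMod e, β i

/-- The set `Ψ` of indivisible positive roots: real positive roots together with `δ`. -/
def PsiSet (e : ℕ) : Set (ZMod e → ℤ) :=
  {β ∈ PhiPos e | ¬ ImaginaryRoot e β} ∪ {deltaRoot e}

lemma height_alphaRoot (e : ℕ) [NeZero e] (t : ℤ) (L : ℕ) :
    height e (alphaRoot e t L) = L := by
  unfold height alphaRoot
  rw [← Nat.cast_sum]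
  norm_cast
  have key := Finset.card_eq_sum_card_fiberwise (f := fun k : ℕ => ((t + (k : ℤ) : ℤ) : ZMod e))
    (s := Finset.range L) (t := Finset.univ) (fun x _ => Finset.mem_univ _)
  rw [Finset.card_range] at key
  exact key.symm

lemma height_pos (e : ℕ) [NeZero e] {β : ZMod e → ℤ} (hβ : β ∈ PhiPos e) :
    0 < height e β := by
  obtain ⟨t, L, hL, rfl⟩ := hβ
  rw [height_alphaRoot]; exact_mod_cast hL

lemma height_add (e : ℕ) [NeZero e] (β γ : ZMod e → ℤ) :
    height e (β + γ) = height e β + height e γ := by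
  simp [height, Finset.sum_add_distrib]

lemma mediant {V : Type*} [AddCommGroup V] [LinearOrder V] [IsOrderedAddMonoid V] [Module ℚ V] [PosSMulStrictMono ℚ V]
    (b d : ℚ) (hb : 0 < b) (hd : 0 < d) (x y : V) (hle : d⁻¹ • y ≤ b⁻¹ • x) :
    d⁻¹ • y ≤ (b + d)⁻¹ • (x + y) ∧ (b + d)⁻¹ • (x + y) ≤ b⁻¹ • x := by
  have hbd : 0 < b + d := by linarith
  have key : b • y ≤ d • x := by
    have := (smul_le_smul_iff_of_pos_left (mul_pos hb hd)).2 hle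
    rw [smul_smul, smul_smul] at this
    rw [show b * d * d⁻¹ = b by field_simp, show b * d * b⁻¹ = d by field_simp] at this
    exact this
  constructor
  · rw [← smul_le_smul_iff_of_pos_left (a := d * (b + d)) (mul_pos hd hbd),
      smul_smul, smul_smul, show d * (b+d) * d⁻¹ = b + d by field_simp,
      show d * (b+d) * (b+d)⁻¹ = d by field_simp]
    rw [add_smul, smul_add]
    exact add_le_add key le_rfl
  · rw [← smul_le_smul_iff_of_pos_left (a := b * (b + d)) (mul_pos hb hbd),
      smul_smul, smul_smul, show b * (b+d) * (b+d)⁻¹ = b by field_simp,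
      show b * (b+d) * b⁻¹ = b + d by field_simp]
    rw [add_smul, smul_add]
    exact add_le_add le_rfl key

/-- If `h : ℤI → V` is a `ℤ`-linear map to a totally ordered `ℚ`-vector space such
that `β ↦ h(β)/ht(β)` is injective on `Ψ`, then
`β ≽ γ ⟺ h(β)/ht(β) ≥ h(γ)/ht(γ)` defines a convex preorder on `Φ₊`. -/
theorem statement12 (e : ℕ) [NeZero e] (he : 1 < e)
    (V : Type*) [AddCommGroup V] [LinearOrder V] [IsOrderedAddMonoid V] [Module ℚ V] [PosSMulStrictMono ℚ V]
    (h : (ZMod e → ℤ) →ₗ[ℤ] V)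
    (hinj : ∀ β ∈ PsiSet e, ∀ γ ∈ PsiSet e,
      (height e β : ℚ)⁻¹ • h β = (height e γ : ℚ)⁻¹ • h γ → β = γ) :
    ∃ P : ConvexPreorderOn e, ∀ β γ : ZMod e → ℤ,
      P.rel β γ ↔ (height e γ : ℚ)⁻¹ • h γ ≤ (height e β : ℚ)⁻¹ • h β := by
  classical
  set q : (ZMod e → ℤ) → V := fun β => (height e β : ℚ)⁻¹ • h β with hq
  have himq : ∀ β : ZMod e → ℤ, ImaginaryRoot e β → q β = q (deltaRoot e) := by
    rintro β ⟨m, hm, rfl⟩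
    have hht : height e (fun _ : ZMod e => (m : ℤ)) = (m : ℤ) * e := by
      simp [height, Finset.sum_const, mul_comm]
    have hhtδ : height e (deltaRoot e) = (e : ℤ) := by simp [height, deltaRoot]
    have hmap : h (fun _ : ZMod e => (m : ℤ)) = (m : ℤ) • h (deltaRoot e) := by
      rw [← map_smul]; congr 1; funext i; simp [deltaRoot]
    simp only [hq]
    rw [hht, hhtδ, hmap, ← Int.cast_smul_eq_zsmul ℚ, smul_smul]
    congr 1
    have hm' : (m : ℚ) ≠ 0 := by exact_mod_cast hm.ne'
    have he' : (e : ℚ) ≠ 0 := Nat.cast_ne_zero.2 (NeZero.ne e)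
    push_cast
    field_simp
  have hδim : ImaginaryRoot e (deltaRoot e) := ⟨1, one_pos, by funext i; simp [deltaRoot]⟩
  refine ⟨⟨fun β γ => q γ ≤ q β, fun β _ => le_refl _,
      fun β γ ν _ _ _ h1 h2 => le_trans h2 h1,
      fun β γ _ _ => le_total (q γ) (q β), ?_, ?_⟩,
      fun β γ => Iff.rfl⟩
  · -- convexity
    intro β γ hβ hγ hrel _
    have hb : (0 : ℚ) < (height e β : ℚ) := by exact_mod_cast height_pos e hβ
    have hd : (0 : ℚ) < (height e γ : ℚ) := by exact_mod_cast height_pos e hγ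
    have hmed := mediant (height e β : ℚ) (height e γ : ℚ) hb hd (h β) (h γ) hrel
    have hq2 : q (β + γ) = ((height e β : ℚ) + (height e γ : ℚ))⁻¹ • (h β + h γ) := by
      simp only [hq, map_add, height_add, Int.cast_add]
    constructor
    · show q (β + γ) ≤ q β
      rw [hq2]; exact hmed.2
    · show q γ ≤ q (β + γ)
      rw [hq2]; exact hmed.1
  · -- imag_equiv
    intro β γ hβ hγ
    constructor
    · rintro ⟨h1, h2⟩
      have heq : q β = q γ := le_antisymm h2 h1
      have hδΨ : deltaRoot e ∈ PsiSet e := Or.inr rfl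
      by_cases hiβ : ImaginaryRoot e β <;> by_cases hiγ : ImaginaryRoot e γ
      · exact Or.inr ⟨hiβ, hiγ⟩
      · exfalso
        have hd : deltaRoot e = γ :=
          hinj (deltaRoot e) hδΨ γ (Or.inl ⟨hγ, hiγ⟩) ((himq β hiβ).symm.trans heq)
        exact hiγ (hd ▸ hδim)
      · exfalso
        have hd : β = deltaRoot e :=
          hinj β (Or.inl ⟨hβ, hiβ⟩) (deltaRoot e) hδΨ (heq.trans (himq γ hiγ))
        exact hiβ (hd ▸ hδim)
      · exact Or.inl (hinj β (Or.inl ⟨hβ, hiβ⟩) γ (Or.inl ⟨hγ, hiγ⟩) heq)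
    · rintro (rfl | ⟨hiβ, hiγ⟩)
      · exact ⟨le_refl _, le_refl _⟩
      · have heq := (himq β hiβ).trans (himq γ hiγ).symm
        exact ⟨heq.ge, heq.le⟩
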